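/- Let ω > 0, A = [[0, 1], [−ω², 0]], and P(t) = [[0, 0], [−ω² cos(2ωt + θ), 0]]. Then lim_{T→∞} (1/T) ∫₀ᵀ e^{−Aτ} P(τ) e^{Aτ} dτ exists and equals B = −(1/4) [[ω sin θ, cos θ], [ω² cos θ, −ω sin θ]]. -/

import Mathlib

open Matrix Filter

attribute [local instance] Matrix.linftyOpNormedRing Matrix.linftyOpNormedAlgebra

noncomputable def Emat (ω t : ℝ) : Matrix (Fin 2) (Fin 2) ℝ :=
  Real.cos (ω * t) • (1 : Matrix (Fin 2) (Fin 2) ℝ)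
    + (ω⁻¹ * Real.sin (ω * t)) • !![0, 1; -ω ^ 2, 0]

lemma A_sq (ω : ℝ) : (!![0, 1; -ω ^ 2, 0] : Matrix (Fin 2) (Fin 2) ℝ) * !![0, 1; -ω ^ 2, 0]
    = (-(ω^2)) • 1 := by
  ext i j
  fin_cases i <;> fin_cases j <;>
    simp [Matrix.mul_apply, Fin.sum_univ_two, Matrix.one_apply]

lemma Emat_hasDerivAt (ω : ℝ) (hω : ω ≠ 0) (t : ℝ) :
    HasDerivAt (Emat ω) (!![0, 1; -ω ^ 2, 0] * Emat ω t) t := by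
  have h1 : HasDerivAt (fun t : ℝ => Real.cos (ω * t)) (-(ω * Real.sin (ω * t))) t := by
    have := (Real.hasDerivAt_cos (ω * t)).comp t ((hasDerivAt_id t).const_mul ω)
    exact this.congr_deriv (by ring)
  have h2 : HasDerivAt (fun t : ℝ => ω⁻¹ * Real.sin (ω * t)) (Real.cos (ω * t)) t := by
    have := ((Real.hasDerivAt_sin (ω * t)).comp t ((hasDerivAt_id t).const_mul ω)).const_mul ω⁻¹
    refine this.congr_deriv (Eq.symm ?_)
    field_simp
  have h := (h1.smul_const (1 : Matrix (Fin 2) (Fin 2) ℝ)).add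
    (h2.smul_const (!![0, 1; -ω ^ 2, 0] : Matrix (Fin 2) (Fin 2) ℝ))
  refine h.congr_deriv (Eq.symm ?_)
  rw [Emat, mul_add, mul_smul_comm, mul_smul_comm, A_sq, mul_one]
  match_scalars <;> field_simp <;> ring_nf

lemma Emat_mul_neg (ω : ℝ) (hω : ω ≠ 0) (t : ℝ) : Emat ω (-t) * Emat ω t = 1 := by
  rw [Emat, Emat]
  rw [add_mul, mul_add, mul_add, smul_mul_assoc, smul_mul_assoc, smul_mul_assoc, smul_mul_assoc,
    mul_smul_comm, mul_smul_comm, mul_smul_comm, mul_smul_comm, A_sq]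
  simp only [mul_neg, Real.cos_neg, Real.sin_neg, smul_smul, smul_neg, neg_smul, one_mul, mul_one]
  have hpy : Real.sin (ω*t)^2 + Real.cos (ω*t)^2 = 1 := Real.sin_sq_add_cos_sq _
  rw [show (1 : Matrix (Fin 2) (Fin 2) ℝ) =
    (1:ℝ) • (1 : Matrix (Fin 2) (Fin 2) ℝ) + (0:ℝ) • !![0, 1; -ω ^ 2, 0] by module]
  match_scalars
  · field_simp
    nlinarith [hpy]
  · ring

lemma exp_eq_Emat (ω : ℝ) (hω : ω ≠ 0) (t : ℝ) :
    NormedSpace.exp (t • (!![0, 1; -ω ^ 2, 0] : Matrix (Fin 2) (Fin 2) ℝ)) = Emat ω t := by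
  set A : Matrix (Fin 2) (Fin 2) ℝ := !![0, 1; -ω ^ 2, 0] with hA
  have hg : ∀ s : ℝ, HasDerivAt (fun u : ℝ => Emat ω (-u) * NormedSpace.exp (u • A))
      0 s := by
    intro s
    have hEneg : HasDerivAt (fun u : ℝ => Emat ω (-u)) (-(A * Emat ω (-s))) s := by
      have h' : HasDerivAt (fun u : ℝ => Emat ω (-u))
          ((-1 : ℝ) • (A * Emat ω (-s))) s :=
        (Emat_hasDerivAt ω hω (-s)).scomp s (hasDerivAt_neg s)
      rwa [neg_one_smul] at h'
    have hexp : HasDerivAt (fun u : ℝ => NormedSpace.exp (u • A))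
        (A * NormedSpace.exp (s • A)) s := hasDerivAt_exp_smul_const' A s
    have := hEneg.mul hexp
    refine this.congr_deriv (Eq.symm ?_)
    have hcomm : Emat ω (-s) * A = A * Emat ω (-s) := by
      rw [Emat, add_mul, mul_add, smul_mul_assoc, smul_mul_assoc, mul_smul_comm, mul_smul_comm,
        one_mul, mul_one]
    rw [← mul_assoc, hcomm, neg_mul, mul_assoc]
    abel
  have hconst : ∀ u : ℝ, Emat ω (-u) * NormedSpace.exp (u • A)
      = Emat ω (-(0:ℝ)) * NormedSpace.exp ((0:ℝ) • A) :=
    fun u => is_const_of_deriv_eq_zero (fun s => (hg s).differentiableAt)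
      (fun s => (hg s).deriv) u 0
  have h0 : Emat ω (-(0:ℝ)) * NormedSpace.exp ((0:ℝ) • A) = 1 := by
    simp [Emat, NormedSpace.exp_zero]
  have hu := (hconst t).trans h0
  calc NormedSpace.exp (t • A) = (Emat ω t * Emat ω (-t)) * NormedSpace.exp (t • A) := by
        rw [show Emat ω t = Emat ω (-(-t)) by rw [neg_neg], Emat_mul_neg ω hω, one_mul]
      _ = Emat ω t * (Emat ω (-t) * NormedSpace.exp (t • A)) := by rw [mul_assoc]
      _ = Emat ω t := by rw [hu, mul_one]

noncomputable def trigP (ω θ a b c d : ℝ) : ℝ → ℝ := fun τ =>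
  a * Real.sin (4*ω*τ+θ) + b * Real.cos (2*ω*τ+θ) + c * Real.cos (4*ω*τ+θ) + d

lemma trigP_cont (ω θ a b c d : ℝ) : Continuous (trigP ω θ a b c d) := by
  unfold trigP; fun_prop

lemma avg_lim (g : ℝ → ℝ) (c M : ℝ) (hM : ∀ T, |g T - c * T| ≤ M) :
    Tendsto (fun T => (1/T) * g T) atTop (nhds c) := by
  have h0 : Tendsto (fun T : ℝ => (1/T) * g T - c) atTop (nhds 0) := by
    apply squeeze_zero_norm' (a := fun T : ℝ => M / T)
    · filter_upwards [eventually_gt_atTop (0:ℝ)] with T hT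
      have hT' : T ≠ 0 := ne_of_gt hT
      have h1 : (1/T) * g T - c = (g T - c*T)/T := by field_simp
      rw [Real.norm_eq_abs, h1, abs_div, abs_of_pos hT]
      gcongr
      exact hM T
    · simpa [div_eq_mul_inv] using tendsto_inv_atTop_zero.const_mul M
  have := h0.add (tendsto_const_nhds : Tendsto (fun _ : ℝ => c) atTop (nhds c))
  simpa using this

lemma abs_mul_sub_le (p x y : ℝ) (hx : |x| ≤ 1) (hy : |y| ≤ 1) : |p*(x-y)| ≤ |p| * 2 := by
  rw [abs_mul]
  have h : |x - y| ≤ 2 := by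
    rw [abs_le] at *
    constructor <;> linarith [hx.1, hx.2, hy.1, hy.2]
  nlinarith [abs_nonneg p]

lemma trig_avg (ω θ a b c d : ℝ) (hω : ω ≠ 0) :
    Tendsto (fun T : ℝ => (1/T) * ∫ τ in (0:ℝ)..T, trigP ω θ a b c d τ) atTop (nhds d) := by
  set F : ℝ → ℝ := fun τ => (-a/(4*ω)) * Real.cos (4*ω*τ+θ) + (b/(2*ω)) * Real.sin (2*ω*τ+θ)
      + (c/(4*ω)) * Real.sin (4*ω*τ+θ) + d*τ with hF
  have hderiv : ∀ τ : ℝ, HasDerivAt F (trigP ω θ a b c d τ) τ := by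
    intro τ
    have h4 : HasDerivAt (fun τ : ℝ => 4*ω*τ+θ) (4*ω) τ := by
      simpa using ((hasDerivAt_id τ).const_mul (4*ω)).add_const θ
    have h2 : HasDerivAt (fun τ : ℝ => 2*ω*τ+θ) (2*ω) τ := by
      simpa using ((hasDerivAt_id τ).const_mul (2*ω)).add_const θ
    have hc4 : HasDerivAt (fun τ : ℝ => Real.cos (4*ω*τ+θ)) (-Real.sin (4*ω*τ+θ) * (4*ω)) τ :=
      (Real.hasDerivAt_cos _).comp τ h4
    have hs4 : HasDerivAt (fun τ : ℝ => Real.sin (4*ω*τ+θ)) (Real.cos (4*ω*τ+θ) * (4*ω)) τ :=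
      (Real.hasDerivAt_sin _).comp τ h4
    have hs2 : HasDerivAt (fun τ : ℝ => Real.sin (2*ω*τ+θ)) (Real.cos (2*ω*τ+θ) * (2*ω)) τ :=
      (Real.hasDerivAt_sin _).comp τ h2
    have hFd := (((hc4.const_mul (-a/(4*ω))).add (hs2.const_mul (b/(2*ω)))).add
      (hs4.const_mul (c/(4*ω)))).add ((hasDerivAt_id τ).const_mul d)
    refine hFd.congr_deriv (Eq.symm ?_)
    unfold trigP
    field_simp
  have hint : ∀ T : ℝ, ∫ τ in (0:ℝ)..T, trigP ω θ a b c d τ = F T - F 0 := fun T =>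
    intervalIntegral.integral_eq_sub_of_hasDerivAt (fun τ _ => hderiv τ)
      ((trigP_cont ω θ a b c d).intervalIntegrable _ _)
  simp only [hint]
  apply avg_lim _ d (|(-a/(4*ω))| * 2 + (|b/(2*ω)| * 2 + |c/(4*ω)| * 2))
  intro T
  have hEq : F T - F 0 - d * T =
      (-a/(4*ω)) * (Real.cos (4*ω*T+θ) - Real.cos (4*ω*0+θ))
      + ((b/(2*ω)) * (Real.sin (2*ω*T+θ) - Real.sin (2*ω*0+θ))
      + (c/(4*ω)) * (Real.sin (4*ω*T+θ) - Real.sin (4*ω*0+θ))) := by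
    simp only [hF]; ring
  rw [hEq]
  refine (abs_add_le _ _).trans (add_le_add ?_ ((abs_add_le _ _).trans (add_le_add ?_ ?_))) <;>
    exact abs_mul_sub_le _ _ _ (by first | exact Real.abs_cos_le_one _ | exact Real.abs_sin_le_one _)
      (by first | exact Real.abs_cos_le_one _ | exact Real.abs_sin_le_one _)

lemma integral_split (f1 f2 f3 f4 : ℝ → ℝ) (h1 : Continuous f1) (h2 : Continuous f2)
    (h3 : Continuous f3) (h4 : Continuous f4) (T : ℝ)
    (M1 M2 M3 M4 : Matrix (Fin 2) (Fin 2) ℝ) :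
    ∫ τ in (0:ℝ)..T, (f1 τ • M1 + f2 τ • M2 + f3 τ • M3 + f4 τ • M4)
      = (∫ τ in (0:ℝ)..T, f1 τ) • M1 + (∫ τ in (0:ℝ)..T, f2 τ) • M2
        + (∫ τ in (0:ℝ)..T, f3 τ) • M3 + (∫ τ in (0:ℝ)..T, f4 τ) • M4 := by
  have i1 : @IntervalIntegrable _ PseudoMetricSpace.toUniformSpace.toTopologicalSpace NormedAddGroup.toENormedAddMonoid (fun τ => f1 τ • M1) MeasureTheory.volume 0 T :=
    (h1.smul continuous_const).intervalIntegrable _ _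
  have i2 : @IntervalIntegrable _ PseudoMetricSpace.toUniformSpace.toTopologicalSpace NormedAddGroup.toENormedAddMonoid (fun τ => f2 τ • M2) MeasureTheory.volume 0 T :=
    (h2.smul continuous_const).intervalIntegrable _ _
  have i3 : @IntervalIntegrable _ PseudoMetricSpace.toUniformSpace.toTopologicalSpace NormedAddGroup.toENormedAddMonoid (fun τ => f3 τ • M3) MeasureTheory.volume 0 T :=
    (h3.smul continuous_const).intervalIntegrable _ _
  have i4 : @IntervalIntegrable _ PseudoMetricSpace.toUniformSpace.toTopologicalSpace NormedAddGroup.toENormedAddMonoid (fun τ => f4 τ • M4) MeasureTheory.volume 0 T :=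
    (h4.smul continuous_const).intervalIntegrable _ _
  rw [intervalIntegral.integral_add ((i1.add i2).add i3) i4,
    intervalIntegral.integral_add (i1.add i2) i3,
    intervalIntegral.integral_add i1 i2,
    intervalIntegral.integral_smul_const, intervalIntegral.integral_smul_const,
    intervalIntegral.integral_smul_const, intervalIntegral.integral_smul_const]

lemma key_integrand (ω θ : ℝ) (hω : ω ≠ 0) (τ : ℝ) :
    NormedSpace.exp ((-τ) • (!![0, 1; -ω ^ 2, 0] : Matrix (Fin 2) (Fin 2) ℝ))
      * !![0, 0; -(ω ^ 2 * Real.cos (2 * ω * τ + θ)), 0]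
      * NormedSpace.exp (τ • (!![0, 1; -ω ^ 2, 0] : Matrix (Fin 2) (Fin 2) ℝ))
    = trigP ω θ (ω/4) 0 0 (-(ω/4*Real.sin θ)) τ • (!![1,0;0,0] : Matrix (Fin 2) (Fin 2) ℝ)
      + trigP ω θ 0 (1/2) (-(1/4)) (-(1/4*Real.cos θ)) τ • (!![0,1;0,0] : Matrix (Fin 2) (Fin 2) ℝ)
      + trigP ω θ 0 (-(ω^2/2)) (-(ω^2/4)) (-(ω^2/4*Real.cos θ)) τ • (!![0,0;1,0] : Matrix (Fin 2) (Fin 2) ℝ)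
      + trigP ω θ (-(ω/4)) 0 0 (ω/4*Real.sin θ) τ • (!![0,0;0,1] : Matrix (Fin 2) (Fin 2) ℝ) := by
  rw [exp_eq_Emat ω hω, exp_eq_Emat ω hω]
  have h2c : Real.cos (2*ω*τ+θ) = (Real.cos (ω*τ)^2 - Real.sin (ω*τ)^2) * Real.cos θ
      - 2*Real.sin (ω*τ)*Real.cos (ω*τ)*Real.sin θ := by
    rw [show 2*ω*τ+θ = (ω*τ+ω*τ)+θ by ring]
    simp only [Real.cos_add, Real.sin_add]; ring
  have h4s : Real.sin (4*ω*τ+θ) = 4*Real.sin (ω*τ)*Real.cos (ω*τ)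
        *(Real.cos (ω*τ)^2 - Real.sin (ω*τ)^2)*Real.cos θ
      + ((Real.cos (ω*τ)^2 - Real.sin (ω*τ)^2)^2
        - 4*Real.sin (ω*τ)^2*Real.cos (ω*τ)^2)*Real.sin θ := by
    rw [show 4*ω*τ+θ = (ω*τ+ω*τ)+((ω*τ+ω*τ)+θ) by ring]
    simp only [Real.cos_add, Real.sin_add]; ring
  have h4c : Real.cos (4*ω*τ+θ) = ((Real.cos (ω*τ)^2 - Real.sin (ω*τ)^2)^2
        - 4*Real.sin (ω*τ)^2*Real.cos (ω*τ)^2)*Real.cos θ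
      - 4*Real.sin (ω*τ)*Real.cos (ω*τ)*(Real.cos (ω*τ)^2 - Real.sin (ω*τ)^2)*Real.sin θ := by
    rw [show 4*ω*τ+θ = (ω*τ+ω*τ)+((ω*τ+ω*τ)+θ) by ring]
    simp only [Real.cos_add, Real.sin_add]; ring
  have hpy := Real.sin_sq_add_cos_sq (ω*τ)
  have hiv := mul_inv_cancel₀ hω
  ext i j
  fin_cases i <;> fin_cases j
  · simp [Emat, trigP, Matrix.mul_apply, Fin.sum_univ_two, Matrix.one_apply, mul_neg,
      Real.cos_neg, Real.sin_neg, h2c, h4s, h4c]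
    linear_combination (-(ω*Real.sin θ/4) * (1 + Real.cos (ω*τ)^2 + Real.sin (ω*τ)^2)) * hpy
      + (ω*(Real.sin (ω*τ)*Real.cos (ω*τ)^3*Real.cos θ
          - 2*Real.sin (ω*τ)^2*Real.cos (ω*τ)^2*Real.sin θ
          - Real.sin (ω*τ)^3*Real.cos (ω*τ)*Real.cos θ)) * hiv
  · simp [Emat, trigP, Matrix.mul_apply, Fin.sum_univ_two, Matrix.one_apply, mul_neg,
      Real.cos_neg, Real.sin_neg, h2c, h4s, h4c]
    linear_combination (-(Real.cos θ/4) + (Real.cos (ω*τ)^2*Real.cos θ)/4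
        - Real.sin (ω*τ)*Real.cos (ω*τ)*Real.sin θ
        - (3/4)*Real.sin (ω*τ)^2*Real.cos θ) * hpy
      + ((Real.sin (ω*τ)^2*Real.cos (ω*τ)^2*Real.cos θ
          - 2*Real.sin (ω*τ)^3*Real.cos (ω*τ)*Real.sin θ
          - Real.sin (ω*τ)^4*Real.cos θ) * (1 + ω*ω⁻¹)) * hiv
  · simp [Emat, trigP, Matrix.mul_apply, Fin.sum_univ_two, Matrix.one_apply, mul_neg,
      Real.cos_neg, Real.sin_neg, h2c, h4s, h4c]
    linear_combination (ω^2*(-(Real.cos θ/4) - (3/4)*Real.cos (ω*τ)^2*Real.cos θ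
        + Real.sin (ω*τ)*Real.cos (ω*τ)*Real.sin θ
        + (1/4)*Real.sin (ω*τ)^2*Real.cos θ)) * hpy
  · simp [Emat, trigP, Matrix.mul_apply, Fin.sum_univ_two, Matrix.one_apply, mul_neg,
      Real.cos_neg, Real.sin_neg, h2c, h4s, h4c]
    linear_combination ((ω*Real.sin θ/4) * (1 + Real.cos (ω*τ)^2 + Real.sin (ω*τ)^2)) * hpy
      + (-(ω*(Real.sin (ω*τ)*Real.cos (ω*τ)^3*Real.cos θ
          - 2*Real.sin (ω*τ)^2*Real.cos (ω*τ)^2*Real.sin θ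
          - Real.sin (ω*τ)^3*Real.cos (ω*τ)*Real.cos θ))) * hiv

/-- For `A = [[0,1],[−ω²,0]]` and `P(t) = [[0,0],[−ω² cos(2ωt+θ),0]]`, the time average
`(1/T)∫₀ᵀ e^{−Aτ} P(τ) e^{Aτ} dτ` converges as `T → ∞` to
`B = −(1/4)[[ω sin θ, cos θ],[ω² cos θ, −ω sin θ]]`. -/
theorem stmt_16 (ω θ : ℝ) (hω : 0 < ω) :
    let A : Matrix (Fin 2) (Fin 2) ℝ := !![0, 1; -ω ^ 2, 0]
    let P : ℝ → Matrix (Fin 2) (Fin 2) ℝ := fun t =>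
      !![0, 0; -(ω ^ 2 * Real.cos (2 * ω * t + θ)), 0]
    Tendsto (fun T : ℝ =>
        (1 / T) • ∫ τ in (0:ℝ)..T,
          NormedSpace.exp ((-τ) • A) * P τ * NormedSpace.exp (τ • A))
      atTop
      (nhds ((-(1/4 : ℝ)) • !![ω * Real.sin θ, Real.cos θ;
                               ω ^ 2 * Real.cos θ, -(ω * Real.sin θ)])) := by
  intro A P
  have hω' : ω ≠ 0 := ne_of_gt hω
  have hkey : ∀ τ : ℝ, NormedSpace.exp ((-τ) • A) * P τ * NormedSpace.exp (τ • A)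
      = trigP ω θ (ω/4) 0 0 (-(ω/4*Real.sin θ)) τ • (!![1,0;0,0] : Matrix (Fin 2) (Fin 2) ℝ)
      + trigP ω θ 0 (1/2) (-(1/4)) (-(1/4*Real.cos θ)) τ • (!![0,1;0,0] : Matrix (Fin 2) (Fin 2) ℝ)
      + trigP ω θ 0 (-(ω^2/2)) (-(ω^2/4)) (-(ω^2/4*Real.cos θ)) τ • (!![0,0;1,0] : Matrix (Fin 2) (Fin 2) ℝ)
      + trigP ω θ (-(ω/4)) 0 0 (ω/4*Real.sin θ) τ • (!![0,0;0,1] : Matrix (Fin 2) (Fin 2) ℝ) :=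
    fun τ => key_integrand ω θ hω' τ
  simp only [hkey]
  have hsplit : ∀ T : ℝ, ∫ τ in (0:ℝ)..T,
      (trigP ω θ (ω/4) 0 0 (-(ω/4*Real.sin θ)) τ • (!![1,0;0,0] : Matrix (Fin 2) (Fin 2) ℝ)
      + trigP ω θ 0 (1/2) (-(1/4)) (-(1/4*Real.cos θ)) τ • (!![0,1;0,0] : Matrix (Fin 2) (Fin 2) ℝ)
      + trigP ω θ 0 (-(ω^2/2)) (-(ω^2/4)) (-(ω^2/4*Real.cos θ)) τ • (!![0,0;1,0] : Matrix (Fin 2) (Fin 2) ℝ)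
      + trigP ω θ (-(ω/4)) 0 0 (ω/4*Real.sin θ) τ • (!![0,0;0,1] : Matrix (Fin 2) (Fin 2) ℝ))
      = (∫ τ in (0:ℝ)..T, trigP ω θ (ω/4) 0 0 (-(ω/4*Real.sin θ)) τ) • !![1,0;0,0]
      + (∫ τ in (0:ℝ)..T, trigP ω θ 0 (1/2) (-(1/4)) (-(1/4*Real.cos θ)) τ) • !![0,1;0,0]
      + (∫ τ in (0:ℝ)..T, trigP ω θ 0 (-(ω^2/2)) (-(ω^2/4)) (-(ω^2/4*Real.cos θ)) τ) • !![0,0;1,0]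
      + (∫ τ in (0:ℝ)..T, trigP ω θ (-(ω/4)) 0 0 (ω/4*Real.sin θ) τ) • !![0,0;0,1] :=
    fun T => integral_split _ _ _ _ (trigP_cont _ _ _ _ _ _) (trigP_cont _ _ _ _ _ _)
      (trigP_cont _ _ _ _ _ _) (trigP_cont _ _ _ _ _ _) T _ _ _ _
  simp only [hsplit, smul_add, smul_smul]
  have t1 := (trig_avg ω θ (ω/4) 0 0 (-(ω/4*Real.sin θ)) hω').smul_const
    (!![1,0;0,0] : Matrix (Fin 2) (Fin 2) ℝ)
  have t2 := (trig_avg ω θ 0 (1/2) (-(1/4)) (-(1/4*Real.cos θ)) hω').smul_const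
    (!![0,1;0,0] : Matrix (Fin 2) (Fin 2) ℝ)
  have t3 := (trig_avg ω θ 0 (-(ω^2/2)) (-(ω^2/4)) (-(ω^2/4*Real.cos θ)) hω').smul_const
    (!![0,0;1,0] : Matrix (Fin 2) (Fin 2) ℝ)
  have t4 := (trig_avg ω θ (-(ω/4)) 0 0 (ω/4*Real.sin θ) hω').smul_const
    (!![0,0;0,1] : Matrix (Fin 2) (Fin 2) ℝ)
  have hlim := ((t1.add t2).add t3).add t4
  convert hlim using 2
  ext i j
  fin_cases i <;> fin_cases j <;> simp <;> ring
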